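/- Let k = 2ℓ+1 be odd and let F be the k-dimensional Lyness map with parameter a ≥ 0. Then the function W(x) = (Π_{j=0}^{ℓ}(x_{2j+1}+1))/(Π_{j=1}^{ℓ} x_{2j}) satisfies W(F(F(x))) = W(x) for all x in the positive orthant; that is, W is a first integral of F∘F. -/

import Mathlib

lemma lyness_key (P Q x0 x1 a S : ℝ) (hQ : Q ≠ 0)
    (h0 : 0 < x0) (h1 : 0 < x1) (hy : 0 < a + S - x0) :
    P * ((a + (S - x0 + (a + S - x0) / x0) - x1) / x1 + 1) / (Q * ((a + S - x0) / x0)) =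
      (x0 + 1) * P / (x1 * Q) := by
  have h0' : x0 ≠ 0 := h0.ne'
  have h1' : x1 ≠ 0 := h1.ne'
  have hy' : a + S - x0 ≠ 0 := hy.ne'
  field_simp
  ring

/-- for odd `k = 2ℓ+1`, `W` is a first integral of `F ∘ F`. -/
theorem lyness_W_two_integral (l : ℕ) (hl : 1 ≤ l) (a : ℝ) (ha : 0 ≤ a)
    (F : (Fin (2 * l + 1) → ℝ) → (Fin (2 * l + 1) → ℝ))
    (hF : ∀ x : Fin (2 * l + 1) → ℝ, ∀ i : Fin (2 * l + 1),
      F x i = if h : (i : ℕ) + 1 < 2 * l + 1 then x ⟨(i : ℕ) + 1, h⟩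
              else (a + (∑ j, x j) - x ⟨0, by omega⟩) / x ⟨0, by omega⟩)
    (W : (Fin (2 * l + 1) → ℝ) → ℝ)
    (hW : ∀ x : Fin (2 * l + 1) → ℝ, W x =
      (∏ j : Fin (l + 1), (x ⟨2 * (j : ℕ), by have := j.isLt; omega⟩ + 1)) /
        ∏ j : Fin l, x ⟨2 * (j : ℕ) + 1, by have := j.isLt; omega⟩)
    (x : Fin (2 * l + 1) → ℝ) (hx : ∀ i, 0 < x i) :
    W (F (F x)) = W x := by
  obtain ⟨m, rfl⟩ : ∃ m, l = m + 1 := ⟨l - 1, by omega⟩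
  have hk : 0 < 2 * (m + 1) + 1 := by omega
  set g : ℕ → ℝ := fun i => x ⟨i % (2 * (m + 1) + 1), Nat.mod_lt _ hk⟩ with hg
  set g1 : ℕ → ℝ := fun i => F x ⟨i % (2 * (m + 1) + 1), Nat.mod_lt _ hk⟩ with hg1
  set g2 : ℕ → ℝ := fun i => F (F x) ⟨i % (2 * (m + 1) + 1), Nat.mod_lt _ hk⟩ with hg2
  have hgx : ∀ (i : ℕ) (h : i < 2 * (m + 1) + 1), x ⟨i, h⟩ = g i := by
    intro i h; simp only [hg]; congr 1; exact Fin.ext (by simp [Nat.mod_eq_of_lt h])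
  have hg1x : ∀ (i : ℕ) (h : i < 2 * (m + 1) + 1), F x ⟨i, h⟩ = g1 i := by
    intro i h; simp only [hg1]; congr 1; exact Fin.ext (by simp [Nat.mod_eq_of_lt h])
  have hg2x : ∀ (i : ℕ) (h : i < 2 * (m + 1) + 1), F (F x) ⟨i, h⟩ = g2 i := by
    intro i h; simp only [hg2]; congr 1; exact Fin.ext (by simp [Nat.mod_eq_of_lt h])
  have hgpos : ∀ i, 0 < g i := fun i => hx _
  set Sg := ∑ i ∈ Finset.range (2 * (m + 1) + 1), g i with hSg
  have hS : ∑ j, x j = Sg := by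
    rw [hSg, ← Fin.sum_univ_eq_sum_range]
    exact Finset.sum_congr rfl fun j _ => by rw [← hgx j j.isLt]
  have hFx : ∀ (i : ℕ), i + 1 < 2 * (m + 1) + 1 → g1 i = g (i + 1) := by
    intro i hi
    rw [← hg1x i (by omega), hF, dif_pos (show i + 1 < 2 * (m + 1) + 1 from hi)]
    exact hgx _ _
  have hylast : g1 (2 * m + 2) = (a + Sg - g 0) / g 0 := by
    rw [← hg1x (2 * m + 2) (by omega), hF,
      dif_neg (show ¬(2 * m + 2 + 1 < 2 * (m + 1) + 1) from by omega), hS]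
    simp only [hgx]
  have hsum : ∑ j, F x j = Sg - g 0 + g1 (2 * m + 2) := by
    have e1 : ∑ j, F x j = ∑ i ∈ Finset.range (2 * (m + 1) + 1), g1 i := by
      rw [← Fin.sum_univ_eq_sum_range]
      exact Finset.sum_congr rfl fun j _ => by rw [← hg1x j j.isLt]
    have e2 : ∑ i ∈ Finset.range (2 * (m + 1) + 1), g1 i
        = (∑ i ∈ Finset.range (2 * (m + 1)), g1 i) + g1 (2 * (m + 1)) :=
      Finset.sum_range_succ _ _
    have e3 : ∑ i ∈ Finset.range (2 * (m + 1)), g1 i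
        = ∑ i ∈ Finset.range (2 * (m + 1)), g (i + 1) :=
      Finset.sum_congr rfl fun i hi => hFx i (by simp only [Finset.mem_range] at hi; omega)
    have e4 : Sg = (∑ i ∈ Finset.range (2 * (m + 1)), g (i + 1)) + g 0 := by
      rw [hSg]; exact Finset.sum_range_succ' _ _
    have e5 : g1 (2 * (m + 1)) = g1 (2 * m + 2) := by rw [show 2 * (m + 1) = 2 * m + 2 from by ring]
    rw [e1, e2, e3, e5, e4]; ring
  have hg2a : ∀ (i : ℕ), i + 2 < 2 * (m + 1) + 1 → g2 i = g (i + 2) := by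
    intro i hi
    rw [← hg2x i (by omega), hF, dif_pos (show i + 1 < 2 * (m + 1) + 1 from by omega)]
    rw [hg1x (i + 1) (by omega), hFx (i + 1) (by omega)]
  have hg2y : g2 (2 * m + 1) = g1 (2 * m + 2) := by
    rw [← hg2x (2 * m + 1) (by omega), hF,
      dif_pos (show 2 * m + 1 + 1 < 2 * (m + 1) + 1 from by omega)]
    exact hg1x (2 * m + 2) (by omega)
  have hg2z : g2 (2 * m + 2) = (a + (Sg - g 0 + g1 (2 * m + 2)) - g 1) / g 1 := by
    rw [← hg2x (2 * m + 2) (by omega), hF,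
      dif_neg (show ¬(2 * m + 2 + 1 < 2 * (m + 1) + 1) from by omega)]
    rw [hsum, hg1x 0 (by omega), hFx 0 (by omega)]
  have hWx : W x = (∏ i ∈ Finset.range (m + 1 + 1), (g (2 * i) + 1)) /
      ∏ i ∈ Finset.range (m + 1), g (2 * i + 1) := by
    rw [hW]
    simp only [hgx]
    rw [Fin.prod_univ_eq_prod_range (fun i => g (2 * i) + 1),
      Fin.prod_univ_eq_prod_range (fun i => g (2 * i + 1))]
  have hWFF : W (F (F x)) = (∏ i ∈ Finset.range (m + 1 + 1), (g2 (2 * i) + 1)) /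
      ∏ i ∈ Finset.range (m + 1), g2 (2 * i + 1) := by
    rw [hW]
    simp only [hg2x]
    rw [Fin.prod_univ_eq_prod_range (fun i => g2 (2 * i) + 1),
      Fin.prod_univ_eq_prod_range (fun i => g2 (2 * i + 1))]
  set P := ∏ i ∈ Finset.range (m + 1), (g (2 * i + 2) + 1) with hP
  set Q := ∏ i ∈ Finset.range m, g (2 * i + 3) with hQ
  have hnum2 : ∏ i ∈ Finset.range (m + 1 + 1), (g2 (2 * i) + 1) = P * (g2 (2 * m + 2) + 1) := by
    have hp : ∏ i ∈ Finset.range (m + 1), (g2 (2 * i) + 1) = P :=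
      Finset.prod_congr rfl fun i hi => by
        rw [hg2a (2 * i) (by simp only [Finset.mem_range] at hi; omega)]
    rw [Finset.prod_range_succ, hp, show 2 * (m + 1) = 2 * m + 2 from by ring]
  have hnum1 : ∏ i ∈ Finset.range (m + 1 + 1), (g (2 * i) + 1) = (g 0 + 1) * P := by
    have hp : ∏ i ∈ Finset.range (m + 1), (g (2 * (i + 1)) + 1) = P :=
      Finset.prod_congr rfl fun i hi => by rw [show 2 * (i + 1) = 2 * i + 2 from by ring]
    rw [Finset.prod_range_succ', hp, mul_comm]
  have hden2 : ∏ i ∈ Finset.range (m + 1), g2 (2 * i + 1) = Q * g1 (2 * m + 2) := by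
    have hq : ∏ i ∈ Finset.range m, g2 (2 * i + 1) = Q :=
      Finset.prod_congr rfl fun i hi =>
        hg2a (2 * i + 1) (by simp only [Finset.mem_range] at hi; omega)
    rw [Finset.prod_range_succ, hq, hg2y]
  have hden1 : ∏ i ∈ Finset.range (m + 1), g (2 * i + 1) = g 1 * Q := by
    have hq : ∏ i ∈ Finset.range m, g (2 * (i + 1) + 1) = Q :=
      Finset.prod_congr rfl fun i hi => by rw [show 2 * (i + 1) + 1 = 2 * i + 3 from by ring]
    rw [Finset.prod_range_succ', hq, mul_comm]
  have hQpos : 0 < Q := Finset.prod_pos fun i _ => hgpos _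
  have hSgtwo : g 0 + g 1 ≤ Sg := by
    have hsub : Finset.range 2 ⊆ Finset.range (2 * (m + 1) + 1) := Finset.range_subset_range.2 (by omega)
    calc g 0 + g 1 = ∑ i ∈ Finset.range 2, g i := by
          simp [Finset.sum_range_succ]
      _ ≤ Sg := by
          rw [hSg]
          exact Finset.sum_le_sum_of_subset_of_nonneg hsub fun i _ _ => (hgpos i).le
  have hypos : 0 < a + Sg - g 0 := by have := hgpos 1; linarith
  rw [hWx, hWFF, hnum2, hnum1, hden2, hden1, hg2z, hylast]
  exact lyness_key P Q (g 0) (g 1) a Sg hQpos.ne' (hgpos 0) (hgpos 1) hypos
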